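/- For n ≥ 0, the nth hook length polynomial of plane forests satisfies H_n(x) = (1/(2n+1)) · binomial((2n+1)x, n) as polynomials in x. -/

import Mathlib

open Polynomial

inductive PlaneTree : Type where
  | node : List PlaneTree → PlaneTree

namespace PlaneTree

/-- total number of vertices -/
def numVertices : PlaneTree → ℕ
  | node ts => 1 + (ts.attach.map (fun t => numVertices t.1)).sum
decreasing_by simp only [PlaneTree.node.sizeOf_spec]; exact Nat.lt_add_left 1 (List.sizeOf_lt_of_mem t.2)

/-- number of internal vertices (vertices with at least one child) -/
def numInternal : PlaneTree → ℕ
  | node ts => (if ts.isEmpty then 0 else 1) + (ts.attach.map (fun t => numInternal t.1)).sum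
decreasing_by simp only [PlaneTree.node.sizeOf_spec]; exact Nat.lt_add_left 1 (List.sizeOf_lt_of_mem t.2)

/-- product of `g h_v` over all internal vertices `v`, where `h_v` is the number of
internal vertices of the subtree rooted at `v` -/
def internalHookProd {α : Type} [CommMonoid α] (g : ℕ → α) : PlaneTree → α
  | node ts =>
    (if ts.isEmpty then 1 else g (numInternal (node ts))) *
      (ts.attach.map (fun t => internalHookProd g t.1)).prod
decreasing_by simp only [PlaneTree.node.sizeOf_spec]; exact Nat.lt_add_left 1 (List.sizeOf_lt_of_mem t.2)

/-- product of `g h_v` over all vertices `v`, where `h_v` is the number of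
vertices of the subtree rooted at `v` -/
def vertexHookProd {α : Type} [CommMonoid α] (g : ℕ → α) : PlaneTree → α
  | node ts =>
    g (numVertices (node ts)) * (ts.attach.map (fun t => vertexHookProd g t.1)).prod
decreasing_by simp only [PlaneTree.node.sizeOf_spec]; exact Nat.lt_add_left 1 (List.sizeOf_lt_of_mem t.2)

/-- every internal vertex has exactly `a` children -/
def IsFullAry (a : ℕ) : PlaneTree → Prop
  | node ts => (ts.length = 0 ∨ ts.length = a) ∧ ∀ t ∈ ts, IsFullAry a t

/-- `IsKMAry k m b T`: with the root of `T` viewed as being on a level of parity `b`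
(`b = false` meaning even), every vertex on an even level has `k` children and
every vertex on an odd level has `m` or `0` children. -/
def IsKMAry (k m : ℕ) : Bool → PlaneTree → Prop
  | b, node ts =>
    (if b then ts.length = m ∨ ts.length = 0 else ts.length = k) ∧
      ∀ t ∈ ts, IsKMAry k m (!b) t

/-- number of vertices on levels of parity `b`, the root having parity `cur` -/
def parityVertices (b cur : Bool) : PlaneTree → ℕ
  | node ts =>
    (if cur = b then 1 else 0) + (ts.attach.map (fun t => parityVertices b (!cur) t.1)).sum
termination_by T => sizeOf T
decreasing_by simp only [PlaneTree.node.sizeOf_spec]; exact Nat.lt_add_left 1 (List.sizeOf_lt_of_mem t.2)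

/-- number of internal vertices on levels of parity `b`, the root having parity `cur` -/
def parityInternal (b cur : Bool) : PlaneTree → ℕ
  | node ts =>
    (if cur = b ∧ ¬ts.isEmpty then 1 else 0) +
      (ts.attach.map (fun t => parityInternal b (!cur) t.1)).sum
termination_by T => sizeOf T
decreasing_by simp only [PlaneTree.node.sizeOf_spec]; exact Nat.lt_add_left 1 (List.sizeOf_lt_of_mem t.2)

/-- the order of a `(k,m)`-ary tree: the number of internal (crucial) vertices on odd levels -/
def kmOrder (T : PlaneTree) : ℕ := parityInternal true false T

end PlaneTree

/-- the polynomial `binomial (a*x, n) = (ax)(ax-1)...(ax-n+1)/n!` -/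
noncomputable def binomPoly (a n : ℕ) : Polynomial ℚ :=
  Polynomial.C (1 / (n.factorial : ℚ)) *
    ∏ i ∈ Finset.range n, (Polynomial.C (a : ℚ) * Polynomial.X - Polynomial.C (i : ℚ))

/-- the hook length polynomial of a plane forest (a linearly ordered list of plane trees) -/
noncomputable def forestHookPoly (F : List PlaneTree) : Polynomial ℚ :=
  (F.map (PlaneTree.vertexHookProd
    (fun h => (Polynomial.C ((2 * h - 1 : ℤ) : ℚ) * Polynomial.X + Polynomial.C (1 - (h : ℚ))) *
      Polynomial.C (1 / (h : ℚ))))).prod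

/-- the `n`th hook length polynomial of plane forests -/
noncomputable def Hf (n : ℕ) : Polynomial ℚ :=
  ∑ᶠ F : {F : List PlaneTree // (F.map PlaneTree.numVertices).sum = n}, forestHookPoly F.1


open PlaneTree Finset

noncomputable def g0 (h : ℕ) : Polynomial ℚ :=
  (Polynomial.C ((2 * h - 1 : ℤ) : ℚ) * Polynomial.X + Polynomial.C (1 - (h : ℚ))) *
    Polynomial.C (1 / (h : ℚ))

def sumV (F : List PlaneTree) : ℕ := (F.map numVertices).sum

lemma numVertices_node (ts : List PlaneTree) : numVertices (node ts) = 1 + sumV ts := by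
  rw [numVertices, sumV, List.attach_map_val]

lemma numVertices_pos (T : PlaneTree) : 0 < numVertices T := by
  cases T with
  | node ts => rw [numVertices_node]; omega

lemma vertexHookProd_node (g : ℕ → Polynomial ℚ) (ts : List PlaneTree) :
    vertexHookProd g (node ts) = g (numVertices (node ts)) * (ts.map (vertexHookProd g)).prod := by
  rw [vertexHookProd, List.attach_map_val]

lemma forestHookPoly_eq (F : List PlaneTree) :
    forestHookPoly F = (F.map (vertexHookProd g0)).prod := rfl

lemma forestHookPoly_nil : forestHookPoly [] = 1 := rfl

lemma forestHookPoly_cons (T : PlaneTree) (F : List PlaneTree) :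
    forestHookPoly (T :: F) = vertexHookProd g0 T * forestHookPoly F := by
  simp [forestHookPoly_eq]

lemma forestHookPoly_node_cons (ts F' : List PlaneTree) :
    forestHookPoly (node ts :: F')
      = g0 (1 + sumV ts) * forestHookPoly ts * forestHookPoly F' := by
  simp only [forestHookPoly_eq, List.map_cons, List.prod_cons, vertexHookProd_node,
    numVertices_node, mul_assoc]

lemma sumV_cons (T : PlaneTree) (F : List PlaneTree) :
    sumV (T :: F) = numVertices T + sumV F := by simp [sumV]

lemma sumV_eq_zero {F : List PlaneTree} (h : sumV F = 0) : F = [] := by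
  cases F with
  | nil => rfl
  | cons T F' =>
    rw [sumV_cons] at h
    have := numVertices_pos T
    omega

def headTs : List PlaneTree → List PlaneTree
  | [] => []
  | (node ts) :: _ => ts

def tailF : List PlaneTree → List PlaneTree
  | [] => []
  | _ :: F' => F'

lemma decomp {F : List PlaneTree} (h : F ≠ []) : F = node (headTs F) :: tailF F := by
  cases F with
  | nil => exact absurd rfl h
  | cons T F' => cases T with | node ts => rfl

lemma sumV_decomp {F : List PlaneTree} {n : ℕ} (h : sumV F = n + 1) :
    sumV F = 1 + sumV (headTs F) + sumV (tailF F) := by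
  have hne : F ≠ [] := by
    intro hF; rw [hF] at h; simp [sumV] at h
  conv_lhs => rw [decomp hne]
  rw [sumV_cons, numVertices_node]

lemma finite_sumV (n : ℕ) : {F : List PlaneTree | sumV F = n}.Finite := by
  induction n using Nat.strong_induction_on with
  | _ n IH =>
    cases n with
    | zero =>
      apply Set.Finite.subset (Set.finite_singleton [])
      intro F hF
      simp only [Set.mem_setOf_eq] at hF
      simp [sumV_eq_zero hF]
    | succ m =>
      apply Set.Finite.subset
        (Set.Finite.image (fun p : List PlaneTree × List PlaneTree => node p.1 :: p.2)
          (Set.Finite.biUnion (Set.finite_Iic m)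
            (fun j hj => Set.Finite.prod (IH j (by have := Set.mem_Iic.mp hj; omega))
              (IH (m - j) (by omega)))))
      intro F hF
      simp only [Set.mem_setOf_eq] at hF
      have hs := sumV_decomp hF
      have hne : F ≠ [] := by
        intro hFn; rw [hFn] at hF; simp [sumV] at hF
      refine ⟨(headTs F, tailF F), ?_, (decomp hne).symm⟩
      refine Set.mem_biUnion (show sumV (headTs F) ∈ Set.Iic m from Set.mem_Iic.mpr (by omega)) ?_
      exact ⟨rfl, show sumV (tailF F) = m - sumV (headTs F) by omega⟩

lemma finite_subtype (n : ℕ) : Finite {F : List PlaneTree // (F.map numVertices).sum = n} := by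
  haveI : Finite {F : List PlaneTree // sumV F = n} := (finite_sumV n).to_subtype
  exact Finite.of_equiv {F : List PlaneTree // sumV F = n}
    (Equiv.subtypeEquivRight (p := fun F => sumV F = n)
      (q := fun F => (F.map numVertices).sum = n) (fun F => Iff.rfl))

lemma Hf_zero : Hf 0 = 1 := by
  letI : Unique {F : List PlaneTree // (F.map numVertices).sum = 0} :=
    ⟨⟨⟨[], rfl⟩⟩, fun F => Subtype.ext ((sumV_eq_zero F.2).symm ▸ rfl)⟩
  rw [Hf, finsum_unique]
  rfl

theorem Hf_succ (n : ℕ) :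
    Hf (n+1) = ∑ p ∈ Finset.HasAntidiagonal.antidiagonal n, g0 (p.1+1) * Hf p.1 * Hf p.2 := by
  haveI inst : ∀ m, Fintype {F : List PlaneTree // (F.map numVertices).sum = m} :=
    fun m => @Fintype.ofFinite _ (finite_subtype m)
  rw [Hf, finsum_eq_sum_of_fintype]
  have hmaps : ∀ F : {F : List PlaneTree // (F.map numVertices).sum = n + 1}, F ∈ Finset.univ →
      (sumV (headTs F.1), sumV (tailF F.1)) ∈ Finset.HasAntidiagonal.antidiagonal n := by
    intro F _
    have h2 : sumV F.1 = n + 1 := F.2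
    have hs := sumV_decomp h2
    rw [Finset.HasAntidiagonal.mem_antidiagonal]
    show sumV (headTs F.1) + sumV (tailF F.1) = n
    omega
  rw [← Finset.sum_fiberwise_of_maps_to hmaps (fun F => forestHookPoly F.1)]
  apply Finset.sum_congr rfl
  rintro ⟨j, l⟩ hp
  have hjl : j + l = n := Finset.HasAntidiagonal.mem_antidiagonal.mp hp
  rw [Hf, Hf, finsum_eq_sum_of_fintype, finsum_eq_sum_of_fintype]
  have hrhs : g0 (j+1) * (∑ ts : {F : List PlaneTree // (F.map numVertices).sum = j}, forestHookPoly ts.1)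
      * (∑ F' : {F : List PlaneTree // (F.map numVertices).sum = l}, forestHookPoly F'.1)
      = ∑ q : {F : List PlaneTree // (F.map numVertices).sum = j} ×
          {F : List PlaneTree // (F.map numVertices).sum = l},
          g0 (j+1) * (forestHookPoly q.1.1 * forestHookPoly q.2.1) := by
    rw [mul_assoc, Finset.sum_mul_sum, Fintype.sum_prod_type]
    simp only [Finset.mul_sum]
  rw [hrhs]
  refine Finset.sum_bij'
    (i := fun (F : {F : List PlaneTree // (F.map numVertices).sum = n + 1}) hF =>
      ((⟨headTs F.1, by
          have := (Finset.mem_filter.mp hF).2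
          exact congrArg Prod.fst this⟩ :
          {F : List PlaneTree // (F.map numVertices).sum = j}),
       (⟨tailF F.1, by
          have := (Finset.mem_filter.mp hF).2
          exact congrArg Prod.snd this⟩ :
          {F : List PlaneTree // (F.map numVertices).sum = l})))
    (j := fun q _ => ⟨node q.1.1 :: q.2.1, by
      have h1 : sumV q.1.1 = j := q.1.2
      have h2 : sumV q.2.1 = l := q.2.2
      show sumV (node q.1.1 :: q.2.1) = n + 1
      rw [sumV_cons, numVertices_node]
      omega⟩)
    ?hi ?hj ?left ?right ?val
  case hi =>
    intro F hF
    exact Finset.mem_univ _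
  case hj =>
    intro q hq
    rw [Finset.mem_filter]
    refine ⟨Finset.mem_univ _, ?_⟩
    have h1 : sumV q.1.1 = j := q.1.2
    have h2 : sumV q.2.1 = l := q.2.2
    show (sumV (headTs (node q.1.1 :: q.2.1)), sumV (tailF (node q.1.1 :: q.2.1))) = (j, l)
    rw [show headTs (node q.1.1 :: q.2.1) = q.1.1 from rfl,
      show tailF (node q.1.1 :: q.2.1) = q.2.1 from rfl, h1, h2]
  case left =>
    intro F hF
    apply Subtype.ext
    have hne : F.1 ≠ [] := by
      intro hFn
      have h2 : sumV F.1 = n + 1 := F.2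
      rw [hFn] at h2; simp [sumV] at h2
    exact (decomp hne).symm
  case right =>
    intro q hq
    obtain ⟨⟨ts, hts⟩, ⟨F', hF'⟩⟩ := q
    simp only [Prod.mk.injEq]
    exact ⟨Subtype.ext rfl, Subtype.ext rfl⟩
  case val =>
    intro F hF
    have hne : F.1 ≠ [] := by
      intro hFn
      have h2 : sumV F.1 = n + 1 := F.2
      rw [hFn] at h2; simp [sumV] at h2
    have hj : sumV (headTs F.1) = j := congrArg Prod.fst (Finset.mem_filter.mp hF).2
    conv_lhs => rw [decomp hne]
    rw [forestHookPoly_node_cons]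
    conv_lhs => rw [hj]
    rw [mul_assoc]
    rw [Nat.add_comm 1 j]

section ChDef
variable {A : Type} [CommRing A] [Algebra ℚ A] {B : Type} [CommRing B] [Algebra ℚ B]

/-- the "choose" element `binom(u, m)` in a `ℚ`-algebra -/
noncomputable def ch (u : A) (m : ℕ) : A :=
  algebraMap ℚ A (1 / m.factorial) * ∏ i ∈ Finset.range m, (u - (i : A))

@[simp] lemma ch_zero (u : A) : ch u 0 = 1 := by simp [ch]

@[simp] lemma ch_one (u : A) : ch u 1 = u := by simp [ch]

lemma prod_shift (u : A) (m : ℕ) : ∏ i ∈ Finset.range (m + 1), (u - (i : A))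
    = (∏ i ∈ Finset.range m, ((u - 1) - (i : A))) * u := by
  rw [Finset.prod_range_succ']
  have h : ∀ i ∈ Finset.range m, (u - (((i+1) : ℕ):A)) = ((u-1) - (i:A)) := by
    intro i _; push_cast; ring
  rw [Finset.prod_congr rfl h]
  simp

lemma fact_split (m : ℕ) : (1 / ((m+1).factorial : ℚ)) = (1 / ((m:ℚ) + 1)) * (1 / (m.factorial : ℚ)) := by
  rw [Nat.factorial_succ]; push_cast; rw [one_div_mul_eq_div, div_div]; ring_nf

lemma ch_succ (u : A) (m : ℕ) :
    ch u (m + 1) = algebraMap ℚ A (1 / (m + 1)) * (u * ch (u - 1) m) := by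
  rw [ch, prod_shift, fact_split, map_mul, ch]
  push_cast
  ring

lemma pascal (u : A) (m : ℕ) :
    ch u (m + 1) - ch (u - 1) (m + 1) = ch (u - 1) m := by
  have h2 : ∏ i ∈ Finset.range (m + 1), ((u - 1) - (i : A))
      = (∏ i ∈ Finset.range m, ((u - 1) - (i : A))) * (u - 1 - m) := Finset.prod_range_succ _ _
  have hm : ((m:A) + 1) = algebraMap ℚ A ((m : ℚ) + 1) := by
    push_cast [map_add, map_natCast]; simp
  have h4 : (1 / ((m:ℚ)+1)) * ((m:ℚ)+1) = 1 := by field_simp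
  unfold ch
  rw [prod_shift, h2, fact_split]
  calc algebraMap ℚ A (1 / ((m:ℚ) + 1) * (1 / ↑m.factorial)) * ((∏ i ∈ Finset.range m, (u - 1 - ↑i)) * u)
      - algebraMap ℚ A (1 / ((m:ℚ) + 1) * (1 / ↑m.factorial)) * ((∏ i ∈ Finset.range m, (u - 1 - ↑i)) * (u - 1 - ↑m))
      = algebraMap ℚ A (1 / ((m:ℚ) + 1)) * algebraMap ℚ A ((m:ℚ) + 1) *
        (algebraMap ℚ A (1 / ↑m.factorial) * ∏ i ∈ Finset.range m, (u - 1 - ↑i)) := by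
        rw [map_mul, ← hm]; ring
    _ = algebraMap ℚ A (1/↑m.factorial) * ∏ i ∈ Finset.range m, (u - 1 - ↑i) := by
        rw [← map_mul, h4, map_one, one_mul]

lemma map_ch (φ : A →ₐ[ℚ] B) (u : A) (m : ℕ) : φ (ch u m) = ch (φ u) m := by
  simp [ch, map_mul, map_prod, map_sub, map_natCast, AlgHom.commutes]

/-- Gould's `f_k(a)` in polynomial form -/
noncomputable def gf (a b : A) : ℕ → A
  | 0 => 1
  | (k+1) => ch (a + ((k+1 : ℕ) : A) * b) (k+1) - b * ch (a + ((k+1 : ℕ) : A) * b - 1) k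

@[simp] lemma gf_zero (a b : A) : gf a b 0 = 1 := rfl

lemma gf_succ (a b : A) (k : ℕ) :
    gf a b (k+1) = ch (a + ((k+1 : ℕ) : A) * b) (k+1) - b * ch (a + ((k+1 : ℕ) : A) * b - 1) k := rfl

lemma map_gf (φ : A →ₐ[ℚ] B) (a b : A) (k : ℕ) : φ (gf a b k) = gf (φ a) (φ b) k := by
  cases k with
  | zero => simp
  | succ k => simp [gf_succ, map_sub, map_mul, map_ch, map_add, map_natCast, map_one]

lemma gf_of_zero (b : A) (k : ℕ) : gf 0 b (k+1) = 0 := by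
  rw [gf_succ, ch_succ]
  have h : (0 : A) + ((k+1:ℕ) : A) * b = algebraMap ℚ A ((k:ℚ)+1) * b := by
    push_cast [map_add, map_natCast]; simp
  rw [h]
  have h2 : algebraMap ℚ A (1/((k:ℚ)+1)) * (algebraMap ℚ A ((k:ℚ)+1) * b * ch (algebraMap ℚ A ((k:ℚ)+1) * b - 1) k)
      = b * ch (algebraMap ℚ A ((k:ℚ)+1) * b - 1) k := by
    rw [← mul_assoc, ← mul_assoc, ← map_mul]
    have h3 : (1/((k:ℚ)+1)) * ((k:ℚ)+1) = 1 := by field_simp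
    rw [h3, map_one, one_mul]
  push_cast at h2 ⊢
  rw [h2, sub_self]

lemma gf_diff (a b : A) (k : ℕ) :
    gf a b (k+1) - gf (a-1) b (k+1) = gf (a-1+b) b k := by
  cases k with
  | zero =>
    simp only [gf_succ, gf_zero, ch_zero, mul_one]
    push_cast
    simp only [show ((0:ℚ)+1) = 1 by norm_num, ch_one]
    ring
  | succ k =>
    rw [gf_succ, gf_succ, gf_succ]
    have e1 : a - 1 + ((k+1+1:ℕ):A) * b = (a + ((k+1+1:ℕ):A) * b) - 1 := by ring
    have e2 : a - 1 + ((k+1+1:ℕ):A) * b - 1 = (a + ((k+1+1:ℕ):A) * b - 1) - 1 := by ring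
    have e3 : a - 1 + b + ((k+1:ℕ):A) * b = (a + ((k+1+1:ℕ):A) * b) - 1 := by push_cast; ring
    have e4 : a - 1 + b + ((k+1:ℕ):A) * b - 1 = (a + ((k+1+1:ℕ):A) * b - 1) - 1 := by push_cast; ring
    rw [e1, e3]
    have p1 := pascal (a + ((k+1+1:ℕ):A) * b) (k+1)
    have p2 := pascal (a + ((k+1+1:ℕ):A) * b - 1) k
    linear_combination p1 - b * p2

/-- Gould's convolution sum -/
noncomputable def GS (n : ℕ) (a b c : A) : A :=
  ∑ p ∈ Finset.HasAntidiagonal.antidiagonal n, gf a b p.1 * ch (c + (p.2 : A) * b) p.2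

lemma map_GS (φ : A →ₐ[ℚ] B) (n : ℕ) (a b c : A) : φ (GS n a b c) = GS n (φ a) (φ b) (φ c) := by
  simp [GS, map_sum, map_mul, map_gf, map_ch, map_add, map_natCast]

lemma GS_of_zero (n : ℕ) (b c : A) : GS n 0 b c = ch (c + (n : A) * b) n := by
  rw [GS, Finset.sum_eq_single (0, n)]
  · simp
  · rintro ⟨k, l⟩ hp hne
    rw [Finset.HasAntidiagonal.mem_antidiagonal] at hp
    cases k with
    | zero => exact absurd (by simp at hp; simp [hp]) hne
    | succ k => rw [gf_of_zero, zero_mul]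
  · intro h
    exact absurd (Finset.HasAntidiagonal.mem_antidiagonal.mpr (by simp)) h


/-- a polynomial invariant under `X ↦ X - 1` is constant -/
lemma eq_C_of_aeval_X_sub_one {A : Type} [CommRing A] [IsDomain A] [Algebra ℚ A]
    (p : A[X]) (h : Polynomial.aeval (X - 1 : A[X]) p = p) : p = C (p.coeff 0) := by
  set q : A[X] := p - C (p.coeff 0) with hq
  have hq1 : Polynomial.aeval (X - 1 : A[X]) q = q := by
    rw [hq, map_sub, h, aeval_C]
    simp [Polynomial.algebraMap_eq]
  have heval : ∀ x : A, q.eval (x - 1) = q.eval x := by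
    intro x
    have := congrArg (Polynomial.eval x) hq1
    rw [← Polynomial.comp_eq_aeval, Polynomial.eval_comp] at this
    simpa using this
  have hnat : ∀ n : ℕ, q.eval (n : A) = q.eval 0 := by
    intro n
    induction n with
    | zero => norm_num
    | succ n ih =>
      have := heval ((n+1 : ℕ) : A)
      push_cast at this
      simp only [add_sub_cancel_right] at this
      push_cast
      rw [← this, ih]
  have h0 : q.eval 0 = 0 := by
    simp [hq, Polynomial.eval_C, Polynomial.coeff_zero_eq_eval_zero]
  have hzero : q = 0 := by
    apply Polynomial.eq_zero_of_infinite_isRoot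
    apply Set.Infinite.mono (s := Set.range (Nat.cast : ℕ → A))
    · rintro x ⟨n, rfl⟩
      simp [Polynomial.IsRoot, hnat n, h0]
    · haveI : CharZero A := charZero_of_injective_algebraMap (algebraMap ℚ A).injective
      exact Set.infinite_range_of_injective Nat.cast_injective
  exact sub_eq_zero.mp hzero


end ChDef

section Shifts
variable {A : Type} [CommRing A] [Algebra ℚ A]

lemma GS_sub_shift (n : ℕ) (a b c : A) :
    GS (n+1) a b c - GS (n+1) a b (c - 1) = GS n a b (c - 1 + b) := by
  unfold GS
  rw [← Finset.sum_sub_distrib, Finset.Nat.sum_antidiagonal_succ'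
    (f := fun p => gf a b p.1 * ch (c + (p.2 : A) * b) p.2
      - gf a b p.1 * ch (c - 1 + (p.2 : A) * b) p.2)]
  simp only [Nat.cast_zero, zero_mul, add_zero, ch_zero, mul_one, sub_self, zero_add]
  apply Finset.sum_congr rfl
  rintro ⟨k, l⟩ hp
  simp only
  have e1 : c - 1 + (((l+1 : ℕ)) : A) * b = (c + ((l+1 : ℕ) : A) * b) - 1 := by ring
  have e2 : (c - 1 + b) + ((l : ℕ) : A) * b = (c + ((l+1 : ℕ) : A) * b) - 1 := by push_cast; ring
  rw [e1, e2, ← mul_sub, pascal]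

lemma GS_sub_shift_a (n : ℕ) (a b c : A) :
    GS (n+1) a b c - GS (n+1) (a - 1) b c = GS n (a - 1 + b) b c := by
  unfold GS
  rw [← Finset.sum_sub_distrib, Finset.Nat.sum_antidiagonal_succ
    (f := fun p => gf a b p.1 * ch (c + (p.2 : A) * b) p.2
      - gf (a - 1) b p.1 * ch (c + (p.2 : A) * b) p.2)]
  simp only [gf_zero, one_mul, sub_self, zero_add]
  apply Finset.sum_congr rfl
  rintro ⟨k, l⟩ hp
  simp only
  rw [← sub_mul, gf_diff]

end Shifts

theorem gould (n : ℕ) : ∀ {A : Type} [CommRing A] [IsDomain A] [Algebra ℚ A] (a b c : A),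
    GS n a b c = ch (a + c + (n : A) * b) n := by
  induction n with
  | zero =>
    intro A _ _ _ a b c
    simp [GS]
  | succ n IH =>
    intro A _ _ _ a b c
    -- work in B2 = (A[Y])[X] with generic a (inner variable) and c (outer variable)
    set aa : Polynomial (Polynomial A) := C X with haa
    set bb : Polynomial (Polynomial A) := C (C b) with hbb
    -- the three algebra homs
    set φc : Polynomial (Polynomial A) →ₐ[ℚ] Polynomial (Polynomial A) :=
      (Polynomial.aeval (X - 1 : Polynomial (Polynomial A))).restrictScalars ℚ with hφc
    set σ1 : Polynomial A →ₐ[ℚ] Polynomial A :=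
      (Polynomial.aeval (X - 1 : Polynomial A)).restrictScalars ℚ with hσ1
    set σ : Polynomial (Polynomial A) →ₐ[ℚ] Polynomial (Polynomial A) :=
      Polynomial.mapAlgHom σ1 with hσ
    have hφaa : φc aa = aa := by
      simp [hφc, haa, Polynomial.aeval_C, Polynomial.algebraMap_eq]
    have hφbb : φc bb = bb := by
      simp [hφc, hbb, Polynomial.aeval_C, Polynomial.algebraMap_eq]
    have hφX : φc (X : Polynomial (Polynomial A)) = X - 1 := by
      simp [hφc]
    have hσaa : σ aa = aa - 1 := by
      simp [hσ, haa, hσ1, Polynomial.mapAlgHom, Polynomial.map_C]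
    have hσbb : σ bb = bb := by
      simp [hσ, hbb, hσ1, Polynomial.mapAlgHom, Polynomial.map_C, Polynomial.aeval_C,
        Polynomial.algebraMap_eq]
    have hσX : σ (X : Polynomial (Polynomial A)) = X := by
      simp [hσ, Polynomial.mapAlgHom]
    set P : Polynomial (Polynomial A) := GS (n+1) aa bb X with hP
    set Q : Polynomial (Polynomial A) :=
      ch (aa + X + (((n+1 : ℕ)) : Polynomial (Polynomial A)) * bb) (n+1) with hQ
    -- step 1 : P - Q is invariant under the c-shift
    have step1 : φc (P - Q) = P - Q := by
      have hφP : φc P = GS (n+1) aa bb (X - 1) := by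
        rw [hP, map_GS, hφaa, hφbb, hφX]
      have hφQ : φc Q = ch (aa + (X - 1) + (((n+1:ℕ)) : Polynomial (Polynomial A)) * bb) (n+1) := by
        rw [hQ, map_ch, map_add, map_add, hφaa, hφX, map_mul, map_natCast, hφbb]
      have hIH : GS n aa bb ((X : Polynomial (Polynomial A)) - 1 + bb)
          = ch (aa + (X - 1 + bb) + (n : Polynomial (Polynomial A)) * bb) n := IH _ _ _
      have hdiff := GS_sub_shift n aa bb (X : Polynomial (Polynomial A))
      have hpas := pascal (aa + X + (((n+1:ℕ)) : Polynomial (Polynomial A)) * bb) n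
      have harg : aa + ((X : Polynomial (Polynomial A)) - 1 + bb) + (n : Polynomial (Polynomial A)) * bb
          = aa + X + (((n+1:ℕ)) : Polynomial (Polynomial A)) * bb - 1 := by push_cast; ring
      have harg2 : aa + ((X : Polynomial (Polynomial A)) - 1) + (((n+1:ℕ)) : Polynomial (Polynomial A)) * bb
          = aa + X + (((n+1:ℕ)) : Polynomial (Polynomial A)) * bb - 1 := by ring
      rw [map_sub, hφP, hφQ, hP, hQ, harg2]
      rw [harg] at hIH
      linear_combination -hdiff + hpas - hIH
    -- step 2 : P - Q is invariant under the a-shift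
    have step2 : σ (P - Q) = P - Q := by
      have hσP : σ P = GS (n+1) (aa - 1) bb X := by
        rw [hP, map_GS, hσaa, hσbb, hσX]
      have hσQ : σ Q = ch (aa - 1 + X + (((n+1:ℕ)) : Polynomial (Polynomial A)) * bb) (n+1) := by
        rw [hQ, map_ch, map_add, map_add, hσaa, hσX, map_mul, map_natCast, hσbb]
      have hIH : GS n (aa - 1 + bb) bb (X : Polynomial (Polynomial A))
          = ch ((aa - 1 + bb) + X + (n : Polynomial (Polynomial A)) * bb) n := IH _ _ _
      have hdiff := GS_sub_shift_a n aa bb (X : Polynomial (Polynomial A))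
      have hpas := pascal (aa + X + (((n+1:ℕ)) : Polynomial (Polynomial A)) * bb) n
      have harg : (aa - 1 + bb) + (X : Polynomial (Polynomial A)) + (n : Polynomial (Polynomial A)) * bb
          = aa + X + (((n+1:ℕ)) : Polynomial (Polynomial A)) * bb - 1 := by push_cast; ring
      have harg2 : aa - 1 + (X : Polynomial (Polynomial A)) + (((n+1:ℕ)) : Polynomial (Polynomial A)) * bb
          = aa + X + (((n+1:ℕ)) : Polynomial (Polynomial A)) * bb - 1 := by ring
      rw [map_sub, hσP, hσQ, hP, hQ, harg2]
      rw [harg] at hIH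
      linear_combination -hdiff + hpas - hIH
    -- hence P - Q is a doubly-constant polynomial
    have hDC : P - Q = C (C (((P - Q).coeff 0).coeff 0)) := by
      have h1 : P - Q = C ((P - Q).coeff 0) := eq_C_of_aeval_X_sub_one _ step1
      have h2 : Polynomial.aeval (X - 1 : Polynomial A) ((P - Q).coeff 0) = (P - Q).coeff 0 := by
        have := congrArg (fun p => Polynomial.coeff p 0) step2
        simpa [hσ, Polynomial.mapAlgHom, Polynomial.coeff_map, hσ1] using this
      have h3 : (P - Q).coeff 0 = C (((P - Q).coeff 0).coeff 0) :=
        eq_C_of_aeval_X_sub_one _ h2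
      conv_lhs => rw [h1, h3]
    -- step 3 : evaluate a at 0 to see that the constant vanishes
    have hk0 : ((P - Q).coeff 0).coeff 0 = 0 := by
      set τ1 : Polynomial A →ₐ[ℚ] A := (Polynomial.aeval (0 : A)).restrictScalars ℚ with hτ1
      set τ : Polynomial (Polynomial A) →ₐ[ℚ] Polynomial A := Polynomial.mapAlgHom τ1 with hτ
      have hτaa : τ aa = 0 := by
        simp [hτ, haa, hτ1, Polynomial.mapAlgHom, Polynomial.map_C]
      have hτbb : τ bb = C b := by
        simp [hτ, hbb, hτ1, Polynomial.mapAlgHom, Polynomial.map_C, Polynomial.aeval_C]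
      have hτX : τ (X : Polynomial (Polynomial A)) = X := by
        simp [hτ, Polynomial.mapAlgHom]
      have hτD : τ (P - Q) = 0 := by
        rw [map_sub, hP, hQ, map_GS, map_ch, hτaa, hτbb, hτX, GS_of_zero,
          map_add, map_add, hτaa, hτX, map_mul, map_natCast, hτbb, zero_add, sub_self]
      rw [hDC] at hτD
      have hc : τ (C (C (((P - Q).coeff 0).coeff 0))) = C (((P - Q).coeff 0).coeff 0) := by
        simp [hτ, Polynomial.mapAlgHom, Polynomial.map_C, hτ1, Polynomial.aeval_C]
      rw [hc] at hτD
      exact (Polynomial.C_eq_zero).mp hτD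
    have hPQ : P = Q := by
      have hz : P - Q = 0 := by rw [hDC, hk0]; simp
      exact sub_eq_zero.mp hz
    -- step 4 : specialize a to `a` and c to `c`
    set ψ1 : Polynomial A →ₐ[ℚ] A := (Polynomial.aeval a).restrictScalars ℚ with hψ1
    set ψ : Polynomial (Polynomial A) →ₐ[ℚ] A :=
      ((Polynomial.aeval c).restrictScalars ℚ).comp (Polynomial.mapAlgHom ψ1) with hψ
    have hψaa : ψ aa = a := by
      simp [hψ, haa, hψ1, Polynomial.mapAlgHom, Polynomial.map_C, Polynomial.aeval_C]
    have hψbb : ψ bb = b := by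
      simp [hψ, hbb, hψ1, Polynomial.mapAlgHom, Polynomial.map_C, Polynomial.aeval_C]
    have hψX : ψ (X : Polynomial (Polynomial A)) = c := by
      simp [hψ, Polynomial.mapAlgHom]
    have hfin := congrArg ψ hPQ
    rw [hP, hQ, map_GS, map_ch, hψaa, hψbb, hψX, map_add, map_add, hψaa, hψX,
      map_mul, map_natCast, hψbb] at hfin
    exact hfin

theorem rothe (n : ℕ) {A : Type} [CommRing A] [IsDomain A] [Algebra ℚ A] (a b c : A) :
    ∑ p ∈ Finset.HasAntidiagonal.antidiagonal n, gf a b p.1 * gf c b p.2 = gf (a + c) b n := by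
  cases n with
  | zero => simp
  | succ m =>
    have expand : ∑ p ∈ Finset.HasAntidiagonal.antidiagonal (m+1), gf a b p.1 * gf c b p.2
        = GS (m+1) a b c - b * GS m a b (c - 1 + b) := by
      unfold GS
      rw [Finset.Nat.sum_antidiagonal_succ' (f := fun p => gf a b p.1 * gf c b p.2),
        Finset.Nat.sum_antidiagonal_succ'
          (f := fun p => gf a b p.1 * ch (c + (p.2 : A) * b) p.2)]
      simp only [gf_zero, mul_one, Nat.cast_zero, zero_mul, add_zero, ch_zero]
      rw [Finset.mul_sum, add_sub_assoc, ← Finset.sum_sub_distrib]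
      congr 1
      apply Finset.sum_congr rfl
      rintro ⟨k, l⟩ hp
      simp only
      rw [gf_succ]
      have e1 : c - 1 + b + ((l:ℕ) : A) * b = c + ((l+1 : ℕ) : A) * b - 1 := by push_cast; ring
      rw [e1]
      ring
    rw [expand, gould, gould, gf_succ]
    have e1 : a + (c - 1 + b) + ((m:ℕ) : A) * b = a + c + (((m+1):ℕ) : A) * b - 1 := by
      push_cast; ring
    rw [e1]

noncomputable def Pp (n : ℕ) : Polynomial ℚ :=
  Polynomial.C (1 / ((2 * n + 1 : ℕ) : ℚ)) * binomPoly (2 * n + 1) n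

lemma ch_eq_binomPoly (a n : ℕ) : ch ((a : Polynomial ℚ) * X) n = binomPoly a n := by
  simp only [ch, binomPoly, Polynomial.algebraMap_eq, Polynomial.C_eq_natCast]

lemma binomPoly_succ (a k : ℕ) :
    binomPoly a (k+1) = Polynomial.C (1 / ((k:ℚ)+1)) * binomPoly a k * (Polynomial.C (a:ℚ) * X - Polynomial.C (k:ℚ)) := by
  unfold binomPoly
  rw [Finset.prod_range_succ, fact_split, map_mul]
  push_cast
  try ring

lemma gf_X (l : ℕ) : gf (X : Polynomial ℚ) (2*X) l = Pp l := by
  cases l with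
  | zero => simp [Pp, binomPoly]
  | succ k =>
    rw [gf_succ]
    have hu : (X : Polynomial ℚ) + ((k+1:ℕ) : Polynomial ℚ) * (2*X)
        = ((2*(k+1)+1 : ℕ) : Polynomial ℚ) * X := by push_cast; ring
    rw [hu, Pp, ← ch_eq_binomPoly, ch_succ]
    rw [Polynomial.algebraMap_eq, ← Polynomial.C_eq_natCast]
    set w := ch ((Polynomial.C ((2*(k+1)+1 : ℕ) : ℚ)) * X - 1) k with hw
    have hc : Polynomial.C ((1:ℚ) / ((k:ℚ)+1)) * Polynomial.C ((2*(k+1)+1 : ℕ) : ℚ)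
        - Polynomial.C (2:ℚ)
        = Polynomial.C ((1:ℚ) / ((2*(k+1)+1 : ℕ):ℚ)) *
          (Polynomial.C ((1:ℚ) / ((k:ℚ)+1)) * Polynomial.C ((2*(k+1)+1 : ℕ) : ℚ)) := by
      simp only [← map_mul, ← map_sub]
      congr 1
      have h1 : ((k:ℚ)+1) ≠ 0 := by positivity
      have h2 : ((2*(k+1)+1 : ℕ) : ℚ) ≠ 0 := by positivity
      field_simp
      push_cast
      ring
    rw [show (2 : Polynomial ℚ) = Polynomial.C (2:ℚ) from (map_ofNat Polynomial.C 2).symm]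
    linear_combination (X * w) * hc

lemma gf_negX (k : ℕ) : gf (-X : Polynomial ℚ) (2*X) (k+1)
    = -(Polynomial.C (1 / ((2*k+1:ℕ):ℚ)) * binomPoly (2*k+1) (k+1)) := by
  rw [gf_succ]
  have hu : (-X : Polynomial ℚ) + ((k+1:ℕ) : Polynomial ℚ) * (2*X)
      = ((2*k+1 : ℕ) : Polynomial ℚ) * X := by push_cast; ring
  rw [hu, ← ch_eq_binomPoly, ch_succ]
  rw [Polynomial.algebraMap_eq, ← Polynomial.C_eq_natCast]
  set w := ch ((Polynomial.C ((2*k+1 : ℕ) : ℚ)) * X - 1) k with hw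
  have hc : Polynomial.C ((1:ℚ) / ((k:ℚ)+1)) * Polynomial.C ((2*k+1 : ℕ) : ℚ)
      - Polynomial.C (2:ℚ)
      = -(Polynomial.C ((1:ℚ) / ((2*k+1 : ℕ):ℚ)) *
        (Polynomial.C ((1:ℚ) / ((k:ℚ)+1)) * Polynomial.C ((2*k+1 : ℕ) : ℚ))) := by
    simp only [← map_mul, ← map_sub, ← map_neg]
    congr 1
    have h1 : ((k:ℚ)+1) ≠ 0 := by positivity
    have h2 : ((2*k+1 : ℕ) : ℚ) ≠ 0 := by positivity
    field_simp
    push_cast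
    ring
  rw [show (2 : Polynomial ℚ) = Polynomial.C (2:ℚ) from (map_ofNat Polynomial.C 2).symm]
  linear_combination (X * w) * hc

lemma g0_mul_Pp (k : ℕ) :
    g0 (k+1) * Pp k = Polynomial.C (1 / ((2*k+1:ℕ):ℚ)) * binomPoly (2*k+1) (k+1) := by
  rw [g0, Pp, binomPoly_succ]
  have h1 : ((2 * ((k+1 : ℕ)) - 1 : ℤ) : ℚ) = ((2*k+1 : ℕ) : ℚ) := by push_cast; ring
  have h2 : (1 - ((k+1:ℕ) : ℚ)) = -(k:ℚ) := by push_cast; ring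
  have h3 : (1 / ((k+1:ℕ):ℚ)) = (1/((k:ℚ)+1)) := by push_cast; ring
  rw [h1, h2, h3, map_neg]
  ring

theorem Pp_rec (m : ℕ) :
    Pp (m+1) = ∑ p ∈ Finset.HasAntidiagonal.antidiagonal m, g0 (p.1+1) * Pp p.1 * Pp p.2 := by
  have R := rothe (m+1) (-X : Polynomial ℚ) (2*X) X
  rw [neg_add_cancel, gf_of_zero] at R
  rw [Finset.Nat.sum_antidiagonal_succ
    (f := fun p => gf (-X : Polynomial ℚ) (2*X) p.1 * gf X (2*X) p.2)] at R
  simp only [gf_zero, one_mul, gf_X] at R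
  have hterm : ∀ p ∈ Finset.HasAntidiagonal.antidiagonal m,
      gf (-X : Polynomial ℚ) (2*X) (p.1+1) * Pp p.2 = -(g0 (p.1+1) * Pp p.1 * Pp p.2) := by
    rintro ⟨k, l⟩ hp
    simp only
    rw [gf_negX, ← g0_mul_Pp]
    ring
  rw [Finset.sum_congr rfl hterm, Finset.sum_neg_distrib] at R
  linear_combination R

/-- `Hₙ(x) = (1/(2n+1))·binom((2n+1)x, n)` for the hook length polynomial of plane forests. -/
theorem hook_length_poly_forests (n : ℕ) :
    Hf n = Polynomial.C (1 / ((2 * n + 1 : ℕ) : ℚ)) * binomPoly (2 * n + 1) n := by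
  suffices H : ∀ n, Hf n = Pp n by
    have h := H n
    unfold Pp at h
    exact h
  intro n
  induction n using Nat.strong_induction_on with
  | _ n IH =>
    cases n with
    | zero =>
      rw [Hf_zero]
      simp [Pp, binomPoly]
    | succ m =>
      rw [Hf_succ, Pp_rec]
      apply Finset.sum_congr rfl
      rintro ⟨j, l⟩ hp
      have hjl := Finset.HasAntidiagonal.mem_antidiagonal.mp hp
      simp only at hjl ⊢
      rw [IH j (by omega), IH l (by omega)]
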